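/- The function u₂(r,θ) = √(3465/(32π)) · cos r · sin⁴r · sin(4θ) on the spherical triangle {(r,θ) : 0 < θ < π/2, 0 < r < π/2} satisfies -(1/sin r)∂_r(sin r ∂_r u) - (1/sin²r)∂²_θ u = 30 u. -/

import Mathlib

open Real

noncomputable def u₂ (r θ : ℝ) : ℝ :=
  Real.sqrt (3465 / (32 * π)) * Real.cos r * Real.sin r ^ 4 * Real.sin (4 * θ)

theorem stmt_6 (r θ : ℝ) (hr : r ∈ Set.Ioo (0 : ℝ) (π / 2))
    (hθ : θ ∈ Set.Ioo (0 : ℝ) (π / 2)) :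
    -(1 / Real.sin r) *
        deriv (fun r' => Real.sin r' * deriv (fun r'' => u₂ r'' θ) r') r -
      (1 / Real.sin r ^ 2) * deriv (deriv (fun θ' => u₂ r θ')) θ = 30 * u₂ r θ := by
  obtain ⟨hr0, hr2⟩ := hr
  have hs : Real.sin r ≠ 0 :=
    ne_of_gt (Real.sin_pos_of_pos_of_lt_pi hr0 (by linarith [Real.pi_pos]))
  set K := Real.sqrt (3465 / (32 * π)) with hK
  -- radial first derivative
  have hdr : ∀ x : ℝ, HasDerivAt (fun r'' => u₂ r'' θ)
      ((K * (-Real.sin x) * Real.sin x ^ 4 +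
        K * Real.cos x * (4 * Real.sin x ^ 3 * Real.cos x)) * Real.sin (4 * θ)) x := by
    intro x
    have h1 : HasDerivAt (fun y => K * Real.cos y) (K * (-Real.sin x)) x :=
      (Real.hasDerivAt_cos x).const_mul K
    have h2 : HasDerivAt (fun y => Real.sin y ^ 4) (4 * Real.sin x ^ 3 * Real.cos x) x := by
      simpa using (Real.hasDerivAt_sin x).fun_pow 4
    simpa only [u₂] using (h1.fun_mul h2).mul_const (Real.sin (4 * θ))
  have hfun : (fun r' => Real.sin r' * deriv (fun r'' => u₂ r'' θ) r') =
      fun r' => Real.sin r' * ((K * (-Real.sin r') * Real.sin r' ^ 4 +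
        K * Real.cos r' * (4 * Real.sin r' ^ 3 * Real.cos r')) * Real.sin (4 * θ)) := by
    funext x; rw [(hdr x).deriv]
  have hA : HasDerivAt (fun y => K * (-Real.sin y)) (K * (-Real.cos r)) r := by
    simpa using ((Real.hasDerivAt_sin r).neg).const_mul K
  have hB : HasDerivAt (fun y => Real.sin y ^ 4) (4 * Real.sin r ^ 3 * Real.cos r) r := by
    simpa using (Real.hasDerivAt_sin r).fun_pow 4
  have hC : HasDerivAt (fun y => K * Real.cos y) (K * (-Real.sin r)) r :=
    (Real.hasDerivAt_cos r).const_mul K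
  have hD : HasDerivAt (fun y => 4 * Real.sin y ^ 3 * Real.cos y)
      (4 * (3 * Real.sin r ^ 2 * Real.cos r) * Real.cos r +
        4 * Real.sin r ^ 3 * (-Real.sin r)) r := by
    have h3 : HasDerivAt (fun y => 4 * Real.sin y ^ 3)
        (4 * (3 * Real.sin r ^ 2 * Real.cos r)) r := by
      simpa [mul_comm, mul_assoc, mul_left_comm] using
        ((Real.hasDerivAt_sin r).pow 3).const_mul (4 : ℝ)
    exact h3.mul (Real.hasDerivAt_cos r)
  have hg := ((hA.fun_mul hB).fun_add (hC.fun_mul hD)).mul_const (Real.sin (4 * θ))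
  have hfull := (Real.hasDerivAt_sin r).fun_mul hg
  rw [hfun, hfull.deriv]
  -- angular derivatives
  have hθ1 : ∀ x : ℝ, HasDerivAt (fun θ' => u₂ r θ')
      (K * Real.cos r * Real.sin r ^ 4 * (Real.cos (4 * x) * 4)) x := by
    intro x
    have h4 : HasDerivAt (fun y : ℝ => Real.sin (4 * y)) (Real.cos (4 * x) * 4) x := by
      simpa [Function.comp_def] using (Real.hasDerivAt_sin (4 * x)).comp x ((hasDerivAt_id x).const_mul (4 : ℝ))
    simpa only [u₂] using h4.const_mul (K * Real.cos r * Real.sin r ^ 4)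
  have hfunθ : deriv (fun θ' => u₂ r θ') =
      fun x => K * Real.cos r * Real.sin r ^ 4 * (Real.cos (4 * x) * 4) :=
    funext fun x => (hθ1 x).deriv
  have hcos : HasDerivAt (fun y : ℝ => Real.cos (4 * y)) (-Real.sin (4 * θ) * 4) θ := by
    simpa [Function.comp_def] using (Real.hasDerivAt_cos (4 * θ)).comp θ ((hasDerivAt_id θ).const_mul (4 : ℝ))
  have hθ2 := (hcos.mul_const (4 : ℝ)).const_mul (K * Real.cos r * Real.sin r ^ 4)
  rw [hfunθ, hθ2.deriv]
  have hpy : Real.cos r ^ 2 = 1 - Real.sin r ^ 2 := Real.cos_sq' r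
  rw [show u₂ r θ = K * Real.cos r * Real.sin r ^ 4 * Real.sin (4 * θ) from rfl]
  field_simp
  linear_combination (-16 * K * Real.sin (4*θ) * Real.cos r) * hpy
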